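/- arXiv:1107.0418 — 4 statements merged into one kernel-verified Lean document; each statement's English description precedes it below -/
import Mathlib

section
/- Let A be a unital C*-algebra and let x₁, x₂ ∈ A. The 3×3 matrix over A with diagonal entries (1,1,1), superdiagonal entries (x₁, x₂), subdiagonal entries (x₁*, x₂*), and zeros elsewhere is strictly positive (i.e. ≥ δ·1 for some δ > 0) in M₃(A) if and only if 1 - x₁*x₁ - x₂x₂* is strictly positive in A. -/
open scoped ComplexOrder

/-- An element of a unital C*-algebra is strictly positive if it dominates a positive
multiple of the identity. -/
def IsStrictlyPositive' {A : Type*} [CStarAlgebra A] [PartialOrder A] [StarOrderedRing A]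
    (s : A) : Prop :=
  ∃ δ : ℝ, 0 < δ ∧ algebraMap ℝ A δ ≤ s

/-- A square matrix over a unital C*-algebra is strictly positive iff it is positive
(a "square": `star B * B`) and invertible; this is equivalent to dominating `δ • 1` in the
C*-algebra `Mₙ(A) ≅` itself. -/
def Matrix.IsStrictlyPositive {A : Type*} [CStarAlgebra A] {n : ℕ}
    (M : Matrix (Fin n) (Fin n) A) : Prop :=
  (∃ B : Matrix (Fin n) (Fin n) A, M = star B * B) ∧ IsUnit M

section MatrixAux

variable {A : Type*} [Ring A] [StarRing A] (x₁ x₂ : A)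

lemma aux_m1 : (!![1, x₁, 0; 0, 1, 0; 0, star x₂, 1] : Matrix (Fin 3) (Fin 3) A) *
    !![1, -x₁, 0; 0, 1, 0; 0, -(star x₂), 1] = 1 := by
  rw [Matrix.mul_fin_three, Matrix.one_fin_three]
  congr 1 <;> simp

lemma aux_m2 : (!![1, -x₁, 0; 0, 1, 0; 0, -(star x₂), 1] : Matrix (Fin 3) (Fin 3) A) *
    !![1, x₁, 0; 0, 1, 0; 0, star x₂, 1] = 1 := by
  rw [Matrix.mul_fin_three, Matrix.one_fin_three]
  congr 1 <;> simp

lemma aux_m3 : star (!![1, x₁, 0; 0, 1, 0; 0, star x₂, 1] : Matrix (Fin 3) (Fin 3) A) =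
    !![1, 0, 0; star x₁, 1, x₂; 0, 0, 1] := by
  ext i j
  fin_cases i <;> fin_cases j <;>
    simp [Matrix.star_apply, Matrix.vecHead, Matrix.vecTail]

lemma aux_ring : star x₁ * x₁ + (1 - star x₁ * x₁ - x₂ * star x₂) + x₂ * star x₂ = 1 := by
  noncomm_ring

lemma aux_key : star (!![1, x₁, 0; 0, 1, 0; 0, star x₂, 1] : Matrix (Fin 3) (Fin 3) A) *
    (!![1, 0, 0; 0, 1 - star x₁ * x₁ - x₂ * star x₂, 0; 0, 0, 1] *
      !![1, x₁, 0; 0, 1, 0; 0, star x₂, 1]) =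
    !![(1 : A), x₁, 0; star x₁, 1, x₂; 0, star x₂, 1] := by
  rw [aux_m3, Matrix.mul_fin_three, Matrix.mul_fin_three]
  congr 1 <;> simp [aux_ring x₁ x₂]

lemma aux_entry :
    ((Matrix.of ![![-x₁], ![1], ![-(star x₂)]]).conjTranspose *
        !![(1 : A), x₁, 0; star x₁, 1, x₂; 0, star x₂, 1] *
        Matrix.of ![![-x₁], ![1], ![-(star x₂)]]) 0 0
      = 1 - star x₁ * x₁ - x₂ * star x₂ := by
  simp [Matrix.mul_apply, Fin.sum_univ_three, Matrix.conjTranspose_apply,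
    Matrix.vecHead, Matrix.vecTail]
  noncomm_ring

lemma aux_m6 {s : A} (hs_sa : star s = s) :
    star (!![1, x₁, 0; 0, s, 0; 0, star x₂, 1] : Matrix (Fin 3) (Fin 3) A) =
    !![1, 0, 0; star x₁, s, x₂; 0, 0, 1] := by
  ext i j
  fin_cases i <;> fin_cases j <;>
    simp [Matrix.star_apply, Matrix.vecHead, Matrix.vecTail, hs_sa]

lemma aux_m7 {s : A} (hs : s * s = 1 - star x₁ * x₁ - x₂ * star x₂) :
    (!![1, 0, 0; star x₁, s, x₂; 0, 0, 1] : Matrix (Fin 3) (Fin 3) A) *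
      !![1, x₁, 0; 0, s, 0; 0, star x₂, 1] =
      !![(1 : A), x₁, 0; star x₁, 1, x₂; 0, star x₂, 1] := by
  rw [Matrix.mul_fin_three]
  congr 1 <;> simp [hs, aux_ring x₁ x₂]

lemma aux_m8 {c w : A} (h : c * w = 1) :
    (!![1, 0, 0; 0, c, 0; 0, 0, 1] : Matrix (Fin 3) (Fin 3) A) *
      !![1, 0, 0; 0, w, 0; 0, 0, 1] = 1 := by
  rw [Matrix.mul_fin_three, Matrix.one_fin_three]
  congr 1 <;> simp [h]

lemma aux_m9l {c : A} (E : Matrix (Fin 3) (Fin 3) A) :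
    ((!![1, 0, 0; 0, c, 0; 0, 0, 1] : Matrix (Fin 3) (Fin 3) A) * E) 1 1 = c * E 1 1 := by
  simp [Matrix.mul_apply, Fin.sum_univ_three, Matrix.vecHead, Matrix.vecTail]

lemma aux_m9r {c : A} (E : Matrix (Fin 3) (Fin 3) A) :
    (E * (!![1, 0, 0; 0, c, 0; 0, 0, 1] : Matrix (Fin 3) (Fin 3) A)) 1 1 = E 1 1 * c := by
  simp [Matrix.mul_apply, Fin.sum_univ_three, Matrix.vecHead, Matrix.vecTail]

end MatrixAux

section Aux

variable {A : Type*} [CStarAlgebra A] [PartialOrder A] [StarOrderedRing A]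

lemma aux_algebraMap_nonneg {δ : ℝ} (hδ : 0 ≤ δ) : (0 : A) ≤ algebraMap ℝ A δ := by
  have h : algebraMap ℝ A δ =
      star (algebraMap ℝ A (Real.sqrt δ)) * algebraMap ℝ A (Real.sqrt δ) := by
    rw [IsSelfAdjoint.star_eq (IsSelfAdjoint.algebraMap A (isSelfAdjoint_iff.mpr rfl)),
      ← map_mul, Real.mul_self_sqrt hδ]
  rw [h]
  exact star_mul_self_nonneg _

lemma aux_isStrictlyPositive_iff (c : A) :
    IsStrictlyPositive' c ↔ 0 ≤ c ∧ IsUnit c := by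
  constructor
  · rintro ⟨δ, hδ, hle⟩
    have h0 : (0 : A) ≤ algebraMap ℝ A δ := aux_algebraMap_nonneg hδ.le
    exact ⟨h0.trans hle,
      CStarAlgebra.isUnit_of_le (algebraMap ℝ A δ) hle
        (IsStrictlyPositive.iff_of_unital.mpr
          ⟨h0, (isUnit_iff_ne_zero.mpr hδ.ne').map (algebraMap ℝ A)⟩)⟩
  · rintro ⟨hc, hu⟩
    rcases subsingleton_or_nontrivial A with h | h
    · exact ⟨1, one_pos, le_of_eq (Subsingleton.elim _ _)⟩
    · have hsa : IsSelfAdjoint c := .of_nonneg hc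
      have hspec : ∀ x ∈ spectrum ℝ c, 0 < x := by
        intro x hx
        refine lt_of_le_of_ne (spectrum_nonneg_of_nonneg hc hx) ?_
        rintro rfl
        exact (spectrum.zero_notMem_iff ℝ).mpr hu hx
      obtain ⟨r, hr, hle⟩ := (CFC.exists_pos_algebraMap_le_iff hsa).mpr hspec
      exact ⟨r, hr, hle⟩

end Aux

set_option maxHeartbeats 1000000

/-- the 3×3 tridiagonal matrix with unit diagonal and superdiagonal `(x₁, x₂)`
is strictly positive in `M₃(A)` iff `1 - x₁*x₁ - x₂x₂*` is strictly positive in `A`. -/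
theorem stmt0 {A : Type*} [CStarAlgebra A] [PartialOrder A] [StarOrderedRing A] (x₁ x₂ : A) :
    Matrix.IsStrictlyPositive
        !![(1 : A), x₁, 0; star x₁, 1, x₂; 0, star x₂, 1] ↔
      IsStrictlyPositive' (1 - star x₁ * x₁ - x₂ * star x₂) := by
  have hNN₁ := aux_m1 x₁ x₂
  have hNN₂ := aux_m2 x₁ x₂
  have key := aux_key x₁ x₂
  have hNunit : IsUnit (!![1, x₁, 0; 0, 1, 0; 0, star x₂, 1] : Matrix (Fin 3) (Fin 3) A) :=
    ⟨⟨_, _, hNN₁, hNN₂⟩, rfl⟩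
  rw [aux_isStrictlyPositive_iff, Matrix.IsStrictlyPositive]
  constructor
  · rintro ⟨⟨C, hC⟩, hMu⟩
    constructor
    · -- positivity of c via the vector u = (-x₁, 1, -x₂*)
      have hCq : (!![(1 : A), x₁, 0; star x₁, 1, x₂; 0, star x₂, 1] :
            Matrix (Fin 3) (Fin 3) A) = C.conjTranspose * C := by
        rw [hC, Matrix.star_eq_conjTranspose]
      have h1 := aux_entry x₁ x₂
      rw [hCq] at h1
      rw [← h1]
      have h2 : (Matrix.of ![![-x₁], ![1], ![-(star x₂)]]).conjTranspose *
            (C.conjTranspose * C) * Matrix.of ![![-x₁], ![1], ![-(star x₂)]] =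
          (C * Matrix.of ![![-x₁], ![1], ![-(star x₂)]]).conjTranspose *
            (C * Matrix.of ![![-x₁], ![1], ![-(star x₂)]]) := by
        rw [Matrix.conjTranspose_mul]
        simp only [Matrix.mul_assoc]
      rw [h2, Matrix.mul_apply]
      refine Finset.sum_nonneg fun k _ => ?_
      rw [Matrix.conjTranspose_apply]
      exact star_mul_self_nonneg _
    · -- c is a unit since diag(1,c,1) = (N*)⁻¹ M N⁻¹ is
      have hstarNN : star (!![1, -x₁, 0; 0, 1, 0; 0, -(star x₂), 1] :
            Matrix (Fin 3) (Fin 3) A) *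
          star (!![1, x₁, 0; 0, 1, 0; 0, star x₂, 1] : Matrix (Fin 3) (Fin 3) A) = 1 := by
        rw [← star_mul, hNN₁, star_one]
      have hD : star (!![1, -x₁, 0; 0, 1, 0; 0, -(star x₂), 1] : Matrix (Fin 3) (Fin 3) A) *
            !![(1 : A), x₁, 0; star x₁, 1, x₂; 0, star x₂, 1] *
            !![1, -x₁, 0; 0, 1, 0; 0, -(star x₂), 1] =
          !![1, 0, 0; 0, 1 - star x₁ * x₁ - x₂ * star x₂, 0; 0, 0, 1] := by
        rw [← key]
        calc _ = (star (!![1, -x₁, 0; 0, 1, 0; 0, -(star x₂), 1] : Matrix (Fin 3) (Fin 3) A) *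
              star (!![1, x₁, 0; 0, 1, 0; 0, star x₂, 1] : Matrix (Fin 3) (Fin 3) A)) *
              !![1, 0, 0; 0, 1 - star x₁ * x₁ - x₂ * star x₂, 0; 0, 0, 1] *
              (!![1, x₁, 0; 0, 1, 0; 0, star x₂, 1] *
                !![1, -x₁, 0; 0, 1, 0; 0, -(star x₂), 1]) := by
              simp only [Matrix.mul_assoc]
          _ = _ := by rw [hstarNN, hNN₁, one_mul, mul_one]
      have hNinvUnit : IsUnit (!![1, -x₁, 0; 0, 1, 0; 0, -(star x₂), 1] :
          Matrix (Fin 3) (Fin 3) A) := ⟨⟨_, _, hNN₂, hNN₁⟩, rfl⟩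
      have hDunit : IsUnit (!![1, 0, 0; 0, 1 - star x₁ * x₁ - x₂ * star x₂, 0; 0, 0, 1] :
          Matrix (Fin 3) (Fin 3) A) := hD ▸ ((hNinvUnit.star.mul hMu).mul hNinvUnit)
      obtain ⟨U, hU⟩ := hDunit
      have hUE' := U.mul_inv
      have hEU' := U.inv_mul
      rw [hU] at hUE' hEU'
      have hUE := congrFun (congrFun hUE' 1) 1
      have hEU := congrFun (congrFun hEU' 1) 1
      rw [aux_m9l] at hUE
      rw [aux_m9r] at hEU
      rw [Matrix.one_apply_eq] at hUE hEU
      exact ⟨⟨_, _, hUE, hEU⟩, rfl⟩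
  · rintro ⟨hc_nonneg, hc_unit⟩
    have hs_nonneg : (0 : A) ≤ CFC.sqrt (1 - star x₁ * x₁ - x₂ * star x₂) := CFC.sqrt_nonneg _
    have hs_sa : star (CFC.sqrt (1 - star x₁ * x₁ - x₂ * star x₂)) =
        CFC.sqrt (1 - star x₁ * x₁ - x₂ * star x₂) :=
      (IsSelfAdjoint.of_nonneg hs_nonneg).star_eq
    have hs2 : CFC.sqrt (1 - star x₁ * x₁ - x₂ * star x₂) *
        CFC.sqrt (1 - star x₁ * x₁ - x₂ * star x₂) = 1 - star x₁ * x₁ - x₂ * star x₂ :=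
      CFC.sqrt_mul_sqrt_self _ hc_nonneg
    constructor
    · -- M = B* B with B = diag(1, √c, 1) * N
      refine ⟨!![1, x₁, 0; 0, CFC.sqrt (1 - star x₁ * x₁ - x₂ * star x₂), 0;
        0, star x₂, 1], ?_⟩
      rw [aux_m6 x₁ x₂ hs_sa, aux_m7 x₁ x₂ hs2]
    · -- M is a unit since N and diag(1,c,1) are
      obtain ⟨v, hv⟩ := hc_unit
      have hcv₁ : (1 - star x₁ * x₁ - x₂ * star x₂) * (↑v⁻¹ : A) = 1 := by
        rw [← hv]; exact v.mul_inv
      have hcv₂ : (↑v⁻¹ : A) * (1 - star x₁ * x₁ - x₂ * star x₂) = 1 := by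
        rw [← hv]; exact v.inv_mul
      have hDunit : IsUnit (!![1, 0, 0; 0, 1 - star x₁ * x₁ - x₂ * star x₂, 0; 0, 0, 1] :
          Matrix (Fin 3) (Fin 3) A) :=
        ⟨⟨_, !![1, 0, 0; 0, (↑v⁻¹ : A), 0; 0, 0, 1], aux_m8 hcv₁, aux_m8 hcv₂⟩, rfl⟩
      rw [← key]
      exact (hNunit.star.mul (hDunit.mul hNunit))
end

section
/- Let A be a unital C*-algebra and x ∈ A. If there exist positive elements a, b ∈ A with a + b = 1 such that the matrix [[a, x], [x*, b]] is positive in M₂(A), then the numerical radius of x satisfies w(x) ≤ 1/2. -/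
open scoped ComplexOrder

/-- A state on a unital C*-algebra: a unital positive linear functional. -/
def IsState {A : Type*} [CStarAlgebra A] (φ : A →ₗ[ℂ] ℂ) : Prop :=
  φ 1 = 1 ∧ ∀ a : A, 0 ≤ φ (star a * a)

/-- The numerical radius `w(x) = sup {|s(x)| : s a state of A}`. -/
noncomputable def numRadius {A : Type*} [CStarAlgebra A] (x : A) : ℝ :=
  sSup {r : ℝ | ∃ φ : A →ₗ[ℂ] ℂ, IsState φ ∧ r = ‖φ x‖}

/-- A state is self-adjoint: `φ (star y) = conj (φ y)`. -/
lemma state_star_aux {A : Type*} [CStarAlgebra A] (φ : A →ₗ[ℂ] ℂ) (hφ : IsState φ)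
    (y : A) : φ (star y) = starRingEnd ℂ (φ y) := by
  have key : ∀ c : ℂ, (0:ℂ) ≤ 1 + c * φ y + starRingEnd ℂ c * φ (star y)
      + (starRingEnd ℂ c * c) * φ (star y * y) := by
    intro c
    have h := hφ.2 (1 + c • y)
    have : star (1 + c • y) * (1 + c • y)
        = 1 + c • y + (starRingEnd ℂ c) • star y
          + (starRingEnd ℂ c * c) • (star y * y) := by
      simp [star_smul, mul_add, add_mul, smul_smul, mul_smul_comm, smul_mul_assoc]
      ring_nf
      abel
    rw [this] at h
    simpa [map_add, map_smul, smul_eq_mul, mul_comm, hφ.1] using h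
  have hyy := hφ.2 y
  rw [Complex.le_def] at hyy
  have him_yy : (φ (star y * y)).im = 0 := by simpa using hyy.2.symm
  have h1 := key 1
  have hI := key Complex.I
  rw [Complex.le_def] at h1 hI
  have e1 : (φ y).im + (φ (star y)).im = 0 := by
    have := h1.2
    simp [Complex.add_im, him_yy] at this
    linarith
  have e2 : (φ y).re - (φ (star y)).re = 0 := by
    have := hI.2
    simp [Complex.add_im, Complex.mul_im, Complex.mul_re, him_yy] at this
    linarith
  apply Complex.ext <;> simp [Complex.conj_re, Complex.conj_im] <;> linarith

/-- Expansion of the quadratic form attached to the positive matrix. -/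
lemma sum_sq_aux {A : Type*} [CStarAlgebra A]
    (x a b : A) (C : Matrix (Fin 2) (Fin 2) A)
    (hM : !![a, x; star x, b] = star C * C) (c : ℂ) (hc : starRingEnd ℂ c * c = 1) :
    a + c • x + starRingEnd ℂ c • star x + b
      = ∑ k : Fin 2, star (C k 0 + c • C k 1) * (C k 0 + c • C k 1) := by
  have h00 : a = ∑ k, star (C k 0) * C k 0 := by
    have := congrFun (congrFun hM 0) 0
    simpa [Matrix.mul_apply] using this
  have h01 : x = ∑ k, star (C k 0) * C k 1 := by
    have := congrFun (congrFun hM 0) 1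
    simpa [Matrix.mul_apply] using this
  have h10 : star x = ∑ k, star (C k 1) * C k 0 := by
    have := congrFun (congrFun hM 1) 0
    simpa [Matrix.mul_apply] using this
  have h11 : b = ∑ k, star (C k 1) * C k 1 := by
    have := congrFun (congrFun hM 1) 1
    simpa [Matrix.mul_apply] using this
  have hc' : c * starRingEnd ℂ c = 1 := by rw [mul_comm]; exact hc
  have expand : ∀ k, star (C k 0 + c • C k 1) * (C k 0 + c • C k 1)
      = star (C k 0) * C k 0 + c • (star (C k 0) * C k 1)
        + starRingEnd ℂ c • (star (C k 1) * C k 0) + star (C k 1) * C k 1 := by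
    intro k
    simp only [star_add, star_smul, add_mul, mul_add, smul_mul_assoc,
      mul_smul_comm, smul_smul, smul_add, ← Complex.star_def, hc, hc',
      Complex.star_def, one_smul]
    abel
  rw [h00, h10, h01, h11]
  simp only [expand, Finset.sum_add_distrib, Finset.smul_sum]

/-- if `a, b ≥ 0`, `a + b = 1` and `[[a, x], [x*, b]]` is positive in `M₂(A)`,
then `w(x) ≤ 1/2`. -/
theorem stmt3 {A : Type*} [CStarAlgebra A] [PartialOrder A] [StarOrderedRing A]
    (x a b : A) (ha : 0 ≤ a) (hb : 0 ≤ b) (hab : a + b = 1)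
    (hpos : ∃ C : Matrix (Fin 2) (Fin 2) A, !![a, x; star x, b] = star C * C) :
    numRadius x ≤ 1 / 2 := by
  apply Real.sSup_le _ (by norm_num)
  rintro r ⟨φ, hφ, rfl⟩
  by_cases hα : φ x = 0
  · rw [hα]; norm_num
  obtain ⟨C, hM⟩ := hpos
  set α : ℂ := φ x with hαdef
  have hnorm : (‖α‖ : ℂ) ≠ 0 := by exact_mod_cast norm_ne_zero_iff.mpr hα
  set c : ℂ := -(starRingEnd ℂ α) / ‖α‖ with hcdef
  have hc : starRingEnd ℂ c * c = 1 := by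
    rw [hcdef]
    simp only [map_neg, map_div₀, Complex.conj_ofReal, Complex.conj_conj]
    field_simp
    rw [Complex.mul_conj']
  have hca : c * α = (-‖α‖ : ℝ) := by
    rw [hcdef]
    field_simp
    rw [Complex.conj_mul']
    push_cast
    ring
  have hcα : starRingEnd ℂ c * starRingEnd ℂ α = (-‖α‖ : ℝ) := by
    rw [hcdef]
    simp only [map_neg, map_div₀, Complex.conj_ofReal, Complex.conj_conj]
    field_simp
    rw [Complex.mul_conj']
    push_cast
    ring
  have hS := sum_sq_aux x a b C hM c hc
  have hpos2 : (0:ℂ) ≤ φ (a + c • x + starRingEnd ℂ c • star x + b) := by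
    rw [hS, map_sum]
    exact Finset.sum_nonneg fun k _ => hφ.2 _
  have hsum : φ a + φ b = 1 := by rw [← map_add, hab, hφ.1]
  have hval : φ (a + c • x + starRingEnd ℂ c • star x + b)
      = ((1 - 2 * ‖α‖ : ℝ) : ℂ) := by
    rw [map_add, map_add, map_add, map_smul, map_smul,
      state_star_aux φ hφ, smul_eq_mul, smul_eq_mul, ← hαdef, hca, hcα]
    push_cast
    linear_combination hsum
  rw [hval] at hpos2
  have : (0:ℝ) ≤ 1 - 2 * ‖α‖ := by exact_mod_cast hpos2
  linarith
end

section
/- Let A be a unital C*-algebra and x ∈ A. Then w(x) < 1/2 if and only if 1 + z·x + z̄·x* is positive and invertible in A for every complex number z of modulus 1. -/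
open scoped ComplexOrder

section Aux

variable {A : Type*} [CStarAlgebra A] [PartialOrder A] [StarOrderedRing A]

lemma IsState.map_nonneg' {φ : A →ₗ[ℂ] ℂ} (hφ : IsState φ) {a : A} (ha : 0 ≤ a) :
    0 ≤ φ a := by
  have h1 : star (CFC.sqrt a) * CFC.sqrt a = a := by
    rw [(IsSelfAdjoint.of_nonneg (CFC.sqrt_nonneg a)).star_eq, CFC.sqrt_mul_sqrt_self a ha]
  simpa [h1] using hφ.2 (CFC.sqrt a)

lemma IsState.mono' {φ : A →ₗ[ℂ] ℂ} (hφ : IsState φ) {a b : A} (hab : a ≤ b) :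
    φ a ≤ φ b := by
  have h := hφ.map_nonneg' (sub_nonneg.mpr hab)
  rw [map_sub] at h
  exact sub_nonneg.mp h

lemma IsState.map_algebraMap' {φ : A →ₗ[ℂ] ℂ} (hφ : IsState φ) (r : ℝ) :
    φ (algebraMap ℝ A r) = (r : ℂ) := by
  rw [IsScalarTower.algebraMap_apply ℝ ℂ A, Algebra.algebraMap_eq_smul_one, map_smul,
    smul_eq_mul, hφ.1, mul_one]
  rfl

lemma IsState.real_bounds {φ : A →ₗ[ℂ] ℂ} (hφ : IsState φ) {h : A} (hh : IsSelfAdjoint h) :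
    (φ h).im = 0 ∧ -‖h‖ ≤ (φ h).re ∧ (φ h).re ≤ ‖h‖ := by
  have h1 : φ h ≤ ((‖h‖ : ℝ) : ℂ) := by
    simpa [hφ.map_algebraMap'] using hφ.mono' hh.le_algebraMap_norm_self
  have h2 : ((-‖h‖ : ℝ) : ℂ) ≤ φ h := by
    have := hφ.mono' hh.neg_algebraMap_norm_le_self
    rw [map_neg, hφ.map_algebraMap'] at this
    simpa using this
  rw [Complex.le_def] at h1 h2
  simp only [Complex.ofReal_re, Complex.ofReal_im] at h1 h2
  exact ⟨h1.2, by simpa using h2.1, h1.1⟩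

lemma cartesian_decomp (a : A) :
    ∃ h k : A, IsSelfAdjoint h ∧ IsSelfAdjoint k ∧ a = h + Complex.I • k ∧
      star a = h - Complex.I • k ∧ ‖h‖ ≤ ‖a‖ ∧ ‖k‖ ≤ ‖a‖ := by
  refine ⟨((1:ℝ)/2) • (a + star a), ((1:ℝ)/2) • ((-Complex.I) • (a - star a)),
    ?_, ?_, ?_, ?_, ?_, ?_⟩
  · rw [IsSelfAdjoint, star_smul, star_trivial, star_add, star_star, add_comm]
  · rw [IsSelfAdjoint, star_smul, star_trivial, star_smul, star_sub, star_star]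
    simp only [star_neg, Complex.star_def, Complex.conj_I, neg_neg]
    module
  · rw [smul_comm, smul_smul, mul_neg, Complex.I_mul_I, neg_neg, one_smul, smul_add, smul_sub]
    module
  · rw [smul_comm, smul_smul, mul_neg, Complex.I_mul_I, neg_neg, one_smul, smul_add, smul_sub]
    module
  · rw [norm_smul]
    have h1 : ‖a + star a‖ ≤ 2 * ‖a‖ := by
      calc ‖a + star a‖ ≤ ‖a‖ + ‖star a‖ := norm_add_le _ _
      _ = 2 * ‖a‖ := by rw [norm_star]; ring
    rw [Real.norm_eq_abs, abs_of_nonneg (by norm_num : (0:ℝ) ≤ (1:ℝ)/2)]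
    nlinarith
  · rw [norm_smul, norm_smul]
    have h1 : ‖a - star a‖ ≤ 2 * ‖a‖ := by
      calc ‖a - star a‖ ≤ ‖a‖ + ‖star a‖ := norm_sub_le _ _
      _ = 2 * ‖a‖ := by rw [norm_star]; ring
    have h2 : ‖-Complex.I‖ = 1 := by simp
    rw [h2, Real.norm_eq_abs, abs_of_nonneg (by norm_num : (0:ℝ) ≤ (1:ℝ)/2)]
    nlinarith

lemma IsState.map_star' {φ : A →ₗ[ℂ] ℂ} (hφ : IsState φ) (a : A) :
    φ (star a) = starRingEnd ℂ (φ a) := by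
  obtain ⟨h, k, hh, hk, hd, hds, -, -⟩ := cartesian_decomp a
  have hhim := (hφ.real_bounds hh).1
  have hkim := (hφ.real_bounds hk).1
  have hhconj : starRingEnd ℂ (φ h) = φ h := Complex.conj_eq_iff_im.mpr hhim
  have hkconj : starRingEnd ℂ (φ k) = φ k := Complex.conj_eq_iff_im.mpr hkim
  rw [hds, hd]
  simp only [map_sub, map_add, map_smul, smul_eq_mul]
  simp only [map_add, map_mul, Complex.conj_I, hhconj, hkconj]
  ring

lemma IsState.norm_apply_le {φ : A →ₗ[ℂ] ℂ} (hφ : IsState φ) (a : A) :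
    ‖φ a‖ ≤ 2 * ‖a‖ := by
  obtain ⟨h, k, hh, hk, hd, -, hnh, hnk⟩ := cartesian_decomp a
  obtain ⟨hhim, hh1, hh2⟩ := hφ.real_bounds hh
  obtain ⟨hkim, hk1, hk2⟩ := hφ.real_bounds hk
  have hfa : φ a = φ h + Complex.I * φ k := by
    rw [hd, map_add, map_smul, smul_eq_mul]
  calc ‖φ a‖ ≤ ‖φ h‖ + ‖Complex.I * φ k‖ := hfa ▸ norm_add_le _ _
  _ = ‖φ h‖ + ‖φ k‖ := by rw [norm_mul, Complex.norm_I, one_mul]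
  _ ≤ ‖h‖ + ‖k‖ := by
      gcongr
      · rw [Complex.norm_def, Complex.normSq_apply, hhim]
        rw [show (φ h).re * (φ h).re + 0 * 0 = (φ h).re ^ 2 by ring, Real.sqrt_sq_eq_abs]
        exact abs_le.mpr ⟨hh1, hh2⟩
      · rw [Complex.norm_def, Complex.normSq_apply, hkim]
        rw [show (φ k).re * (φ k).re + 0 * 0 = (φ k).re ^ 2 by ring, Real.sqrt_sq_eq_abs]
        exact abs_le.mpr ⟨hk1, hk2⟩
  _ ≤ 2 * ‖a‖ := by linarith

lemma isSelfAdjoint_algebraMap_real (r : ℝ) : IsSelfAdjoint (algebraMap ℝ A r) := by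
  simp [Algebra.algebraMap_eq_smul_one, IsSelfAdjoint, star_smul]

/-- `r•1 ≤ b` iff `r` is a lower bound for the real spectrum. -/
lemma algebraMap_le_iff_spec {b : A} (hb : IsSelfAdjoint b) (r : ℝ) :
    algebraMap ℝ A r ≤ b ↔ ∀ t ∈ spectrum ℝ b, r ≤ t := by
  have hsa : IsSelfAdjoint (b - algebraMap ℝ A r) :=
    hb.sub (isSelfAdjoint_algebraMap_real r)
  rw [← sub_nonneg, StarOrderedRing.nonneg_iff_spectrum_nonneg (R := ℝ) _ hsa]
  have hspec : spectrum ℝ (b - algebraMap ℝ A r) = (· - r) '' spectrum ℝ b := by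
    rw [← spectrum.sub_singleton_eq, Set.sub_singleton]
  rw [hspec]
  simp only [Set.forall_mem_image, sub_nonneg]

end Aux

section NormOne

variable {A : Type*} [CStarAlgebra A] [Nontrivial A]

/-- A norm-contractive unital functional maps self-adjoint elements to reals. -/
lemma im_eq_zero_of_contractive (g : A →L[ℂ] ℂ) (hg1 : g 1 = 1)
    (hgb : ∀ a : A, ‖g a‖ ≤ ‖a‖) {h : A} (hh : IsSelfAdjoint h) : (g h).im = 0 := by
  by_contra hv
  set v := (g h).im with hvdef
  have key : ∀ s : ℝ, (v + s)^2 ≤ ‖h‖^2 + s^2 := by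
    intro s
    set m : A := ((s : ℂ) * Complex.I) • (1 : A) with hm
    set c : A := h + m with hc
    have hstar : star c = h - m := by
      rw [hc, star_add, hh.star_eq, hm, star_smul, star_one]
      have : star ((s : ℂ) * Complex.I) = -((s : ℂ) * Complex.I) := by
        simp [Complex.star_def, Complex.conj_I]
      rw [this, neg_smul, sub_eq_add_neg]
    have hmul : star c * c = h * h + ((s : ℂ)^2) • (1 : A) := by
      rw [hstar, hc, sub_mul, mul_add, mul_add]
      have hcomm : m * h = h * m := by
        rw [hm, smul_mul_assoc, one_mul, mul_smul_comm, mul_one]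
      have hmm : m * m = (-((s:ℂ)^2)) • (1 : A) := by
        rw [hm, smul_mul_assoc, one_mul, smul_smul]
        congr 1
        rw [mul_mul_mul_comm, Complex.I_mul_I]
        ring
      rw [hcomm, hmm, neg_smul]
      abel
    have hnormc : ‖c‖^2 ≤ ‖h‖^2 + s^2 := by
      have h1 : ‖c‖ * ‖c‖ = ‖star c * c‖ := (CStarRing.norm_star_mul_self (x := c)).symm
      have h2 : ‖star c * c‖ ≤ ‖h * h‖ + ‖((s:ℂ)^2) • (1 : A)‖ :=
        hmul ▸ norm_add_le _ _
      have h3 : ‖h * h‖ = ‖h‖ * ‖h‖ := by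
        nth_rewrite 1 [← hh.star_eq]
        exact CStarRing.norm_star_mul_self
      have h4 : ‖((s:ℂ)^2) • (1 : A)‖ = s^2 := by
        rw [norm_smul, norm_one, mul_one]
        rw [show ((s:ℂ)^2) = ((s^2 : ℝ) : ℂ) by push_cast; ring]
        rw [Complex.norm_real, Real.norm_eq_abs, abs_of_nonneg (sq_nonneg s)]
      nlinarith [norm_nonneg c]
    have hgc : g c = g h + (s : ℂ) * Complex.I := by
      rw [hc, map_add, hm, map_smul, smul_eq_mul, hg1, mul_one]
    have him : (g c).im = v + s := by
      rw [hgc, Complex.add_im, Complex.mul_im]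
      simp [hvdef]
    have habs : |(g c).im| ≤ ‖c‖ := by
      calc |(g c).im| ≤ ‖g c‖ := Complex.abs_im_le_norm _
      _ = ‖g c‖ := rfl
      _ ≤ ‖c‖ := hgb c
    rw [him] at habs
    nlinarith [norm_nonneg c, abs_nonneg (v + s), sq_abs (v + s)]
  have h1 := key (‖h‖^2 / (2 * v))
  have h2 : 2 * v * (‖h‖^2 / (2 * v)) = ‖h‖^2 := by
    field_simp
  have h3 : 0 < v^2 := lt_of_le_of_ne (sq_nonneg v) (Ne.symm (pow_ne_zero 2 hv))
  nlinarith

end NormOne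

section NormOne2

variable {A : Type*} [CStarAlgebra A] [PartialOrder A] [StarOrderedRing A] [Nontrivial A]

lemma nonneg_of_contractive (g : A →L[ℂ] ℂ) (hg1 : g 1 = 1)
    (hgb : ∀ a : A, ‖g a‖ ≤ ‖a‖) {c : A} (hc : 0 ≤ c) : 0 ≤ g c := by
  have hcsa : IsSelfAdjoint c := .of_nonneg hc
  set d : A := algebraMap ℝ A ‖c‖ - c with hd
  have hd0 : 0 ≤ d := sub_nonneg.mpr hcsa.le_algebraMap_norm_self
  have hdsa : IsSelfAdjoint d := .of_nonneg hd0
  have hdle : ‖d‖ ≤ ‖c‖ := by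
    rw [CStarAlgebra.norm_le_iff_le_algebraMap d (norm_nonneg c) hd0, hd]
    simpa using hc
  have h1 : (g c).im = 0 := im_eq_zero_of_contractive g hg1 hgb hcsa
  have h3 : g d = (‖c‖ : ℂ) - g c := by
    rw [hd, map_sub, IsScalarTower.algebraMap_apply ℝ ℂ A, Algebra.algebraMap_eq_smul_one,
      map_smul, smul_eq_mul, hg1, mul_one]
    rfl
  have h4 : (g d).re ≤ ‖c‖ := by
    calc (g d).re ≤ ‖g d‖ := Complex.re_le_norm _
    _ = ‖g d‖ := rfl
    _ ≤ ‖c‖ := (hgb d).trans hdle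
  have h5 : (g d).re = ‖c‖ - (g c).re := by rw [h3]; simp
  rw [Complex.le_def]
  refine ⟨?_, by simp [h1]⟩
  simp only [Complex.zero_re]
  linarith

end NormOne2

section Exists

variable {A : Type*} [CStarAlgebra A] [PartialOrder A] [StarOrderedRing A]

open WeakDual in
/-- Every point of the real spectrum of a self-adjoint element is attained by a state. -/
lemma exists_state {b : A} (hb : IsSelfAdjoint b) {t : ℝ} (ht : t ∈ spectrum ℝ b) :
    ∃ φ : A →ₗ[ℂ] ℂ, IsState φ ∧ φ b = (t : ℂ) := by
  have hA : Nontrivial A := by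
    by_contra hA
    rw [not_nontrivial_iff_subsingleton] at hA
    have : spectrum ℝ b = ∅ := by
      rw [spectrum, spectrum.resolventSet_of_subsingleton, Set.compl_univ]
    simp [this] at ht
  haveI hnb : IsStarNormal b := hb.isStarNormal
  set B := StarAlgebra.elemental ℂ b with hB
  haveI hBnt : Nontrivial B := ⟨1, 0, fun hc => one_ne_zero (congrArg Subtype.val hc)⟩
  have htC : (t : ℂ) ∈ spectrum ℂ b := spectrum.algebraMap_mem ℂ ht
  obtain ⟨f, hf⟩ := (StarAlgebra.elemental.bijective_characterSpaceToSpectrum b).2 ⟨(t:ℂ), htC⟩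
  have hf' : f ⟨b, StarAlgebra.elemental.self_mem ℂ b⟩ = (t : ℂ) := congrArg Subtype.val hf
  have hfb : ∀ a : B, ‖f a‖ ≤ ‖a‖ := fun a =>
    spectrum.norm_le_norm_of_mem (AlgHom.apply_mem_spectrum f a)
  set p : Submodule ℂ A := Subalgebra.toSubmodule (StarAlgebra.elemental ℂ b).toSubalgebra with hp
  have hmem : ∀ x : A, x ∈ p → x ∈ StarAlgebra.elemental ℂ b := fun x hx => hx
  set lin0 : p →ₗ[ℂ] ℂ :=
    { toFun := fun x => f ⟨x.1, hmem x.1 x.2⟩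
      map_add' := by
        intro x y
        rw [← map_add]
        rfl
      map_smul' := by
        intro r x
        rw [← map_smul]
        rfl } with hlin0def
  have hlin0 : ∀ x : p, ‖lin0 x‖ ≤ 1 * ‖x‖ := by
    intro x
    rw [one_mul]
    exact hfb _
  set lin : p →L[ℂ] ℂ := LinearMap.mkContinuous lin0 1 hlin0 with hlin
  obtain ⟨g, hg, hgnorm⟩ := exists_extension_norm_eq p lin
  have hgle : ‖g‖ ≤ 1 := by
    rw [hgnorm]
    exact LinearMap.mkContinuous_norm_le _ zero_le_one _
  have hgb : ∀ a : A, ‖g a‖ ≤ ‖a‖ := fun a =>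
    (g.le_opNorm a).trans (by nlinarith [norm_nonneg a])
  have hg1 : g 1 = 1 := by
    have h1 : (1 : A) ∈ p := one_mem (StarAlgebra.elemental ℂ b)
    have h2 := hg ⟨1, h1⟩
    rw [h2]
    show f ⟨(1:A), _⟩ = 1
    rw [show (⟨(1:A), hmem 1 h1⟩ : B) = 1 from rfl, map_one]
  have hgbval : g b = (t : ℂ) := by
    have hbm : b ∈ p := StarAlgebra.elemental.self_mem ℂ b
    have h2 := hg ⟨b, hbm⟩
    rw [h2]
    exact hf'
  refine ⟨g.toLinearMap, ⟨hg1, fun a => ?_⟩, hgbval⟩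
  exact nonneg_of_contractive g hg1 hgb (star_mul_self_nonneg a)

end Exists

section Main

variable {A : Type*} [CStarAlgebra A] [PartialOrder A] [StarOrderedRing A]

lemma one_nonneg' : (0 : A) ≤ 1 := by simpa using star_mul_self_nonneg (1 : A)

lemma algebraMap_mono' {r s : ℝ} (h : r ≤ s) : algebraMap ℝ A r ≤ algebraMap ℝ A s := by
  rw [← sub_nonneg, ← map_sub, Algebra.algebraMap_eq_smul_one]
  exact smul_nonneg (by linarith) one_nonneg'

lemma sa_of_z (x : A) (z : ℂ) : IsSelfAdjoint (1 + z • x + (starRingEnd ℂ z) • star x) := by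
  rw [IsSelfAdjoint, star_add, star_add, star_one, star_smul, star_smul, star_star]
  simp only [Complex.star_def, Complex.conj_conj]
  abel

lemma state_val (x : A) (z : ℂ) {φ : A →ₗ[ℂ] ℂ} (hφ : IsState φ) :
    φ (1 + z • x + (starRingEnd ℂ z) • star x) = 1 + 2 * (((z * φ x).re : ℝ) : ℂ) := by
  rw [map_add, map_add, hφ.1, map_smul, map_smul, hφ.map_star', smul_eq_mul, smul_eq_mul,
    add_assoc, ← map_mul, Complex.add_conj]
  push_cast
  ring

end Main

/-- `w(x) < 1/2` iff `1 + z·x + z̄·x*` is positive and invertible for every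
unimodular complex number `z`. -/
theorem stmt4 {A : Type*} [CStarAlgebra A] [PartialOrder A] [StarOrderedRing A] (x : A) :
    numRadius x < 1 / 2 ↔
      ∀ z : ℂ, ‖z‖ = 1 →
        0 ≤ 1 + z • x + (starRingEnd ℂ z) • star x ∧
          IsUnit (1 + z • x + (starRingEnd ℂ z) • star x) := by
  classical
  set S := {r : ℝ | ∃ φ : A →ₗ[ℂ] ℂ, IsState φ ∧ r = ‖φ x‖} with hS
  have hBdd : BddAbove S := ⟨2 * ‖x‖, by rintro r ⟨φ, hφ, rfl⟩; exact hφ.norm_apply_le x⟩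
  constructor
  · intro hlt z hz
    have key : ∀ t ∈ spectrum ℝ (1 + z • x + (starRingEnd ℂ z) • star x),
        1 - 2 * numRadius x ≤ t := by
      intro t ht
      obtain ⟨φ, hφ, hφa⟩ := exists_state (sa_of_z x z) ht
      have h1 : (t : ℂ) = 1 + 2 * (((z * φ x).re : ℝ) : ℂ) := by
        rw [← hφa, state_val x z hφ]
      have h2 : t = 1 + 2 * (z * φ x).re := by exact_mod_cast h1
      have h3 : -‖φ x‖ ≤ (z * φ x).re := by
        have habs := Complex.abs_re_le_norm (z * φ x)
        have heq : ‖z * φ x‖ = ‖φ x‖ := by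
          rw [norm_mul, hz, one_mul]
        rw [heq] at habs
        linarith [(abs_le.mp habs).1]
      have h4 : ‖φ x‖ ≤ numRadius x := le_csSup hBdd ⟨φ, hφ, rfl⟩
      linarith
    have hpos : 0 ≤ 1 + z • x + (starRingEnd ℂ z) • star x := by
      rw [StarOrderedRing.nonneg_iff_spectrum_nonneg (R := ℝ) _ (sa_of_z x z)]
      intro t ht
      linarith [key t ht]
    refine ⟨hpos, ?_⟩
    rw [← spectrum.zero_notMem_iff ℂ]
    intro h0
    have h0r : (0 : ℝ) ∈ spectrum ℝ (1 + z • x + (starRingEnd ℂ z) • star x) :=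
      spectrum.of_algebraMap_mem ℂ (by simpa using h0)
    linarith [key 0 h0r]
  · intro hyp
    rcases subsingleton_or_nontrivial A with hsub | hnt
    · have hS0 : S = ∅ := by
        ext r
        rw [hS]
        simp only [Set.mem_setOf_eq, Set.mem_empty_iff_false, iff_false, not_exists]
        rintro φ ⟨⟨hφ1, -⟩, -⟩
        have h10 : (1 : A) = 0 := Subsingleton.elim _ _
        rw [h10, map_zero] at hφ1
        exact one_ne_zero hφ1.symm
      rw [numRadius, ← hS, hS0, Real.sSup_empty]
      norm_num
    · set F : ℂ → ℝ := fun z => sInf (spectrum ℝ (1 + z • x + (starRingEnd ℂ z) • star x))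
        with hF
      have hne : ∀ z : ℂ, (spectrum ℝ (1 + z • x + (starRingEnd ℂ z) • star x)).Nonempty :=
        fun z => (sa_of_z x z).spectrum_nonempty
      have hbddb : ∀ z : ℂ, BddBelow (spectrum ℝ (1 + z • x + (starRingEnd ℂ z) • star x)) :=
        fun z => (spectrum.isCompact _).bddBelow
      have hFle : ∀ z : ℂ, algebraMap ℝ A (F z) ≤ 1 + z • x + (starRingEnd ℂ z) • star x :=
        fun z => (algebraMap_le_iff_spec (sa_of_z x z) _).mpr fun t ht => csInf_le (hbddb z) ht
      have hdiff : ∀ z w : ℂ,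
          (1 + z • x + (starRingEnd ℂ z) • star x) - (1 + w • x + (starRingEnd ℂ w) • star x)
            = (z - w) • x + (starRingEnd ℂ (z - w)) • star x := by
        intro z w
        rw [map_sub, sub_smul, sub_smul]
        abel
      have hdiffnorm : ∀ z w : ℂ,
          ‖(1 + z • x + (starRingEnd ℂ z) • star x) - (1 + w • x + (starRingEnd ℂ w) • star x)‖
            ≤ 2 * ‖x‖ * dist z w := by
        intro z w
        rw [hdiff z w]
        calc ‖(z - w) • x + (starRingEnd ℂ (z - w)) • star x‖
            ≤ ‖(z - w) • x‖ + ‖(starRingEnd ℂ (z - w)) • star x‖ := norm_add_le _ _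
        _ = ‖z - w‖ * ‖x‖ + ‖starRingEnd ℂ (z - w)‖ * ‖star x‖ := by rw [norm_smul, norm_smul]
        _ = 2 * ‖x‖ * dist z w := by
            rw [RCLike.norm_conj, norm_star, dist_eq_norm]
            ring
      have hlip : ∀ z w : ℂ, F w - F z ≤ 2 * ‖x‖ * dist z w := by
        intro z w
        have hd : IsSelfAdjoint ((1 + z • x + (starRingEnd ℂ z) • star x)
            - (1 + w • x + (starRingEnd ℂ w) • star x)) := (sa_of_z x z).sub (sa_of_z x w)
        have h1 : algebraMap ℝ A (F w - 2 * ‖x‖ * dist z w)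
            ≤ 1 + z • x + (starRingEnd ℂ z) • star x := by
          have h2 := hd.neg_algebraMap_norm_le_self
          have h3 : algebraMap ℝ A (F w) + -(algebraMap ℝ A
              ‖(1 + z • x + (starRingEnd ℂ z) • star x)
                - (1 + w • x + (starRingEnd ℂ w) • star x)‖)
              ≤ 1 + z • x + (starRingEnd ℂ z) • star x := by
            calc algebraMap ℝ A (F w) + -(algebraMap ℝ A
                ‖(1 + z • x + (starRingEnd ℂ z) • star x)
                  - (1 + w • x + (starRingEnd ℂ w) • star x)‖)
                ≤ (1 + w • x + (starRingEnd ℂ w) • star x)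
                  + ((1 + z • x + (starRingEnd ℂ z) • star x)
                    - (1 + w • x + (starRingEnd ℂ w) • star x)) := add_le_add (hFle w) h2
            _ = 1 + z • x + (starRingEnd ℂ z) • star x := by abel
          calc algebraMap ℝ A (F w - 2 * ‖x‖ * dist z w)
              ≤ algebraMap ℝ A (F w - ‖(1 + z • x + (starRingEnd ℂ z) • star x)
                - (1 + w • x + (starRingEnd ℂ w) • star x)‖) :=
                algebraMap_mono' (by linarith [hdiffnorm z w])
          _ = algebraMap ℝ A (F w) + -(algebraMap ℝ A
                ‖(1 + z • x + (starRingEnd ℂ z) • star x)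
                  - (1 + w • x + (starRingEnd ℂ w) • star x)‖) := by
                rw [map_sub, sub_eq_add_neg]
          _ ≤ _ := h3
        have h4 := (algebraMap_le_iff_spec (sa_of_z x z) _).mp h1
        have h5 : F w - 2 * ‖x‖ * dist z w ≤ F z := le_csInf (hne z) h4
        linarith
      have hcont : Continuous F := by
        have hK : LipschitzWith ⟨2 * ‖x‖, by positivity⟩ F := by
          apply LipschitzWith.of_dist_le_mul
          intro z w
          rw [Real.dist_eq, abs_sub_le_iff]
          constructor
          · rw [dist_comm]
            exact hlip w z
          · exact hlip z w
        exact hK.continuous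
      obtain ⟨z₀, hz₀, hminOn⟩ := (isCompact_sphere (0 : ℂ) 1).exists_isMinOn
        ⟨1, by simp⟩ hcont.continuousOn
      have hz₀n : ‖z₀‖ = 1 := mem_sphere_zero_iff_norm.mp hz₀
      obtain ⟨hpos₀, hunit₀⟩ := hyp z₀ hz₀n
      set ε := F z₀ with hε
      have hεmem : ε ∈ spectrum ℝ (1 + z₀ • x + (starRingEnd ℂ z₀) • star x) :=
        (spectrum.isCompact _).sInf_mem (hne z₀)
      have hε0 : 0 ≤ ε :=
        (StarOrderedRing.nonneg_iff_spectrum_nonneg (R := ℝ) _ (sa_of_z x z₀)).mp hpos₀ ε hεmem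
      have hεne : ε ≠ 0 := by
        intro h0
        apply (spectrum.zero_notMem_iff ℂ).mpr hunit₀
        have := spectrum.algebraMap_mem ℂ (h0 ▸ hεmem)
        simpa using this
      have hεpos : 0 < ε := lt_of_le_of_ne hε0 (Ne.symm hεne)
      have hbound : ∀ r ∈ S, r ≤ (1 - ε) / 2 := by
        rintro r ⟨φ, hφ, rfl⟩
        set u := φ x with hu
        set z : ℂ := if u = 0 then (1 : ℂ) else -(starRingEnd ℂ u) / (‖u‖ : ℂ) with hzdef
        have hz1 : ‖z‖ = 1 := by
          rw [hzdef]
          split_ifs with h0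
          · simp
          · rw [norm_div, norm_neg, RCLike.norm_conj]
            rw [Complex.norm_real, Real.norm_eq_abs, abs_norm]
            exact div_self (norm_ne_zero_iff.mpr h0)
        have hzmul : z * u = -((‖u‖ : ℝ) : ℂ) := by
          rw [hzdef]
          split_ifs with h0
          · simp [h0]
          · have hnz : ((‖u‖ : ℝ) : ℂ) ≠ 0 := by
              simpa using norm_ne_zero_iff.mpr h0
            field_simp
            rw [mul_comm, Complex.mul_conj, Complex.normSq_eq_norm_sq]
            push_cast
            field_simp
        have hmem : z ∈ Metric.sphere (0 : ℂ) 1 := mem_sphere_zero_iff_norm.mpr hz1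
        have hεF : ε ≤ F z := hminOn hmem
        have hle : algebraMap ℝ A ε ≤ 1 + z • x + (starRingEnd ℂ z) • star x :=
          le_trans (algebraMap_mono' hεF) (hFle z)
        have hφle : ((ε : ℝ) : ℂ) ≤ φ (1 + z • x + (starRingEnd ℂ z) • star x) := by
          have := hφ.mono' hle
          rwa [hφ.map_algebraMap'] at this
        rw [state_val x z hφ] at hφle
        rw [← hu, hzmul] at hφle
        have hφle' : (ε : ℝ) ≤ 1 + 2 * (-((‖u‖ : ℝ) : ℂ)).re := by
          have h2 : ((ε : ℝ) : ℂ) ≤ (((1 + 2 * (-((‖u‖ : ℝ) : ℂ)).re : ℝ)) : ℂ) := by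
            convert hφle using 2
            push_cast
            ring
          exact_mod_cast h2
        simp only [Complex.neg_re, Complex.ofReal_re] at hφle'
        linarith
      obtain ⟨φ₁, hφ₁, -⟩ := exists_state (IsSelfAdjoint.one (R := A)) (show (1:ℝ) ∈ spectrum ℝ (1:A) by
        rw [spectrum.mem_iff]
        simp only [map_one, sub_self]
        exact not_isUnit_zero)
      have hSne : S.Nonempty := ⟨‖φ₁ x‖, φ₁, hφ₁, rfl⟩
      have : numRadius x ≤ (1 - ε) / 2 := csSup_le hSne hbound
      linarith
end

section
/- Let A be a unital C*-algebra and x ∈ A. If there exist positive invertible elements a, b ∈ A with a + b = 1 such that [[a, x], [x*, b]] is positive and invertible in M₂(A), then 1 + z·x + z̄·x* is positive and invertible in A for every z ∈ ℂ with |z| = 1. -/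
set_option maxHeartbeats 1000000


open scoped ComplexOrder

/-- An element of a unital C*-algebra is positive and invertible iff it dominates a positive
multiple of the identity. -/
def IsStrictlyPositiveOrig {A : Type*} [CStarAlgebra A] [PartialOrder A] [StarOrderedRing A]
    (s : A) : Prop :=
  ∃ δ : ℝ, 0 < δ ∧ algebraMap ℝ A δ ≤ s

section Aux

variable {A : Type*} [CStarAlgebra A] [PartialOrder A] [StarOrderedRing A]

lemma myAlgebraMap_nonneg {r : ℝ} (hr : 0 ≤ r) : (0:A) ≤ algebraMap ℝ A r := by
  have h := star_mul_self_nonneg (algebraMap ℝ A (Real.sqrt r))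
  rwa [show star (algebraMap ℝ A (Real.sqrt r)) = algebraMap ℝ A (Real.sqrt r) by
        simp [Algebra.algebraMap_eq_smul_one, star_smul],
      ← map_mul, Real.mul_self_sqrt hr] at h

lemma myKey {s : A} (h0 : 0 ≤ s) (hu : IsUnit s) : ∃ δ : ℝ, 0 < δ ∧ algebraMap ℝ A δ ≤ s := by
  rcases subsingleton_or_nontrivial A with h | h
  · exact ⟨1, one_pos, le_of_eq (Subsingleton.elim _ _)⟩
  · have hsa : IsSelfAdjoint s := .of_nonneg h0
    obtain ⟨r, hr, hrle⟩ := (CFC.exists_pos_algebraMap_le_iff hsa).mpr fun t ht =>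
      (spectrum_nonneg_of_nonneg h0 ht).lt_of_ne'
        (by rintro rfl; exact (spectrum.zero_mem_iff ℝ).mp ht hu)
    exact ⟨r, hr, hrle⟩

lemma myDiagUnit {A : Type*} [Ring A] {a S : A}
    (hu : IsUnit (!![a, 0; 0, S] : Matrix (Fin 2) (Fin 2) A)) : IsUnit S := by
  obtain ⟨u, hu'⟩ := hu
  obtain ⟨K, h1, h2⟩ : ∃ K, !![a, 0; 0, S] * K = 1 ∧ K * !![a, 0; 0, S] = 1 :=
    ⟨(u⁻¹).val, by rw [← hu']; exact u.mul_inv, by rw [← hu']; exact u.inv_mul⟩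
  refine ⟨⟨S, K 1 1, ?_, ?_⟩, rfl⟩
  · have e1 := congrFun (congrFun h1 1) 1
    simpa [Matrix.mul_apply, Fin.sum_univ_two, Matrix.one_apply] using e1
  · have e2 := congrFun (congrFun h2 1) 1
    simpa [Matrix.mul_apply, Fin.sum_univ_two, Matrix.one_apply] using e2

lemma myDiagPos {A : Type*} [CStarAlgebra A] [PartialOrder A] [StarOrderedRing A] {a S : A}
    {E : Matrix (Fin 2) (Fin 2) A} (hE : !![a, 0; 0, S] = star E * E) : (0:A) ≤ S := by
  have e := congrFun (congrFun hE 1) 1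
  have h : S = star (E 0 1) * E 0 1 + star (E 1 1) * E 1 1 := by
    simpa [Matrix.mul_apply, Fin.sum_univ_two, Matrix.star_apply] using e
  rw [h]
  exact add_nonneg (star_mul_self_nonneg _) (star_mul_self_nonneg _)

end Aux

/-- if `a, b` are positive invertible, `a + b = 1` and `[[a, x], [x*, b]]` is
positive and invertible in `M₂(A)`, then `1 + z·x + z̄·x*` is positive and invertible in `A`
for every `z ∈ ℂ` with `|z| = 1`. -/
theorem stmt5 {A : Type*} [CStarAlgebra A] [PartialOrder A] [StarOrderedRing A]
    (x a b : A) (ha : IsStrictlyPositiveOrig a) (hb : IsStrictlyPositiveOrig b) (hab : a + b = 1)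
    (hM : Matrix.IsStrictlyPositive !![a, x; star x, b]) :
    ∀ z : ℂ, ‖z‖ = 1 → IsStrictlyPositiveOrig (1 + z • x + (starRingEnd ℂ z) • star x) := by
  intro z hz
  obtain ⟨α, hα, hαa⟩ := ha
  obtain ⟨⟨B, hB⟩, hMu⟩ := hM
  have hz1 : (starRingEnd ℂ z) * z = 1 := by
    rw [Complex.conj_mul']
    norm_cast
    simp [Complex.sq_norm, Complex.normSq_eq_norm_sq, hz]
  have hz2 : z * (starRingEnd ℂ z) = 1 := by rw [mul_comm]; exact hz1
  set y := z • x with hy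
  have hsy : star y = (starRingEnd ℂ z) • star x := by
    rw [hy, star_smul, Complex.star_def]
  set U : Matrix (Fin 2) (Fin 2) A := !![1, 0; 0, z • 1] with hUdef
  have hassoc : ∀ P : Matrix (Fin 2) (Fin 2) A,
      star (P * U) * (P * U) = star U * (star P * P) * U := by
    intro P
    rw [star_mul]
    noncomm_ring
  have hN : !![a, y; star y, b] = star (B * U) * (B * U) := by
    rw [hassoc, ← hB]
    ext i j
    fin_cases i <;> fin_cases j <;>
      simp [hUdef, Matrix.mul_apply, Fin.sum_univ_two, Matrix.star_apply, star_smul,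
        mul_smul_comm, smul_mul_assoc, smul_smul, hz1, hz2, hsy]
    all_goals exact hy
  have hUu : IsUnit U := by
    refine ⟨⟨U, !![1, 0; 0, (starRingEnd ℂ z) • 1], ?_, ?_⟩, rfl⟩ <;>
    · ext i j
      fin_cases i <;> fin_cases j <;>
        simp [hUdef, Matrix.mul_apply, Fin.sum_univ_two, Matrix.one_apply, smul_smul, hz1, hz2]
  have hNu : IsUnit (!![a, y; star y, b]) := by
    rw [hN, hassoc, ← hB]
    exact (hUu.star.mul hMu).mul hUu
  -- facts about `a` and its inverse `c`
  have ha0 : (0:A) ≤ a := (myAlgebraMap_nonneg hα.le).trans hαa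
  have hsa : IsSelfAdjoint a := .of_nonneg ha0
  have haU : IsUnit a :=
    CStarAlgebra.isUnit_of_le _ hαa (isStrictlyPositive_algebraMap hα)
  set c : A := ((haU.unit⁻¹ : Aˣ) : A) with hcdef
  have hac : a * c = 1 := by
    have := haU.unit.mul_inv
    rwa [IsUnit.unit_spec] at this
  have hca : c * a = 1 := by
    have := haU.unit.inv_mul
    rwa [IsUnit.unit_spec] at this
  have hc0 : (0:A) ≤ c := CFC.inv_nonneg_of_nonneg haU.unit (by rwa [IsUnit.unit_spec])
  have hsc : IsSelfAdjoint c := .of_nonneg hc0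
  -- the Schur complement
  set S : A := b - star y * c * y with hSdef
  set L : Matrix (Fin 2) (Fin 2) A := !![1, c * y; 0, 1] with hLdef
  set Li : Matrix (Fin 2) (Fin 2) A := !![1, -(c * y); 0, 1] with hLidef
  have hLi1 : Li * L = 1 := by
    ext i j
    fin_cases i <;> fin_cases j <;>
      simp [hLidef, hLdef, Matrix.mul_apply, Fin.sum_univ_two, Matrix.one_apply]
  have hLi2 : L * Li = 1 := by
    ext i j
    fin_cases i <;> fin_cases j <;>
      simp [hLidef, hLdef, Matrix.mul_apply, Fin.sum_univ_two, Matrix.one_apply]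
  have hstarL : star L = !![1, 0; star y * c, 1] := by
    ext i j
    fin_cases i <;> fin_cases j <;>
      simp [hLdef, Matrix.star_apply, star_mul, hsc.star_eq]
  have hfact : !![a, y; star y, b] = star L * !![a, 0; 0, S] * L := by
    rw [hstarL]
    ext i j
    fin_cases i <;> fin_cases j <;>
      simp [hLdef, Matrix.mul_apply, Fin.sum_univ_two, hSdef]
    · rw [← mul_assoc, hac, one_mul]
    · rw [mul_assoc, hca, mul_one]
    · rw [mul_assoc (star y * c) a, ← mul_assoc a c y, hac, one_mul]
      abel
  have hD : star Li * !![a, y; star y, b] * Li = !![a, 0; 0, S] := by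
    rw [hfact]
    have : star Li * (star L * !![a, 0; 0, S] * L) * Li
        = star (L * Li) * !![a, 0; 0, S] * (L * Li) := by
      rw [star_mul]; noncomm_ring
    rw [this, hLi2, star_one, one_mul, mul_one]
  have hLiu : IsUnit Li := ⟨⟨Li, L, hLi1, hLi2⟩, rfl⟩
  have hDu : IsUnit (!![a, 0; 0, S] : Matrix (Fin 2) (Fin 2) A) := by
    rw [← hD]
    exact (hLiu.star.mul hNu).mul hLiu
  -- S is a unit
  have hSu : IsUnit S := myDiagUnit hDu
  -- S is nonnegative
  have hS0 : (0:A) ≤ S := by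
    refine myDiagPos (a := a) (E := B * U * Li) ?_
    rw [← hD, hN, star_mul (B * U) Li]
    noncomm_ring
  obtain ⟨ε, hε, hεS⟩ := myKey hS0 hSu
  -- the final identity
  have hfin : 1 + y + star y = star (a + y) * c * (a + y) + S := by
    rw [star_add, hsa.star_eq, add_mul a (star y) c, hac, add_mul, one_mul,
      mul_add (star y * c), mul_assoc (star y) c a, hca, mul_one, hSdef, ← hab]
    abel
  refine ⟨ε, hε, ?_⟩
  have hle : algebraMap ℝ A ε ≤ 1 + y + star y := by
    refine hεS.trans ?_
    rw [hfin]
    exact le_add_of_nonneg_left (star_left_conjugate_nonneg hc0 _)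
  rw [← hsy]
  exact hle
end
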